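/- Let k be a field of characteristic 0. The monomial xyz ∈ k[x,y,z] cannot be written as a linear combination of 3 or fewer cubes of linear forms; that is, there do not exist scalars c₁,c₂,c₃ ∈ k and linear forms ℓ₁,ℓ₂,ℓ₃ ∈ k[x,y,z] with xyz = c₁ℓ₁³ + c₂ℓ₂³ + c₃ℓ₃³. Hence the Waring rank of xyz is 4. -/

import Mathlib

open MvPolynomial

/-- The linear form with coefficient vector `a`. -/
noncomputable def linForm {k : Type*} [CommRing k] {n : Type*} [Fintype n]
    (a : n → k) : MvPolynomial n k :=
  ∑ i, C (a i) * X i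

/-- Over a field of characteristic 0, the monomial `xyz` is not a linear combination of 3
(or fewer) cubes of linear forms, but it is a linear combination of 4 cubes of linear forms;
hence its Waring rank is 4. -/
theorem waring_rank_xyz_eq_four (k : Type*) [Field k] [CharZero k] :
    (¬ ∃ (c : Fin 3 → k) (a : Fin 3 → Fin 3 → k),
        (X 0 * X 1 * X 2 : MvPolynomial (Fin 3) k) = ∑ i, C (c i) * linForm (a i) ^ 3) ∧
    (∃ (c : Fin 4 → k) (a : Fin 4 → Fin 3 → k),
        (X 0 * X 1 * X 2 : MvPolynomial (Fin 3) k) = ∑ i, C (c i) * linForm (a i) ^ 3) := by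
  constructor
  · rintro ⟨c, a, h⟩
    have hL : ∀ (i : Fin 3) (j : Fin 3), pderiv j (linForm (a i)) = C (a i j) := by
      intro i j
      simp [linForm, pderiv_X, Finset.sum_ite_eq', Pi.single_apply]
    set M : Matrix (Fin 3) (Fin 3) k := Matrix.of (fun j i => 3 * c i * a i j) with hMdef
    have key : ∀ j : Fin 3, (pderiv j) (X 0 * X 1 * X 2 : MvPolynomial (Fin 3) k)
        = ∑ i, C (M j i) * (linForm (a i))^2 := by
      intro j
      have hdj := congrArg (pderiv j) h
      rw [map_sum] at hdj
      rw [hdj]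
      simp only [pderiv_C_mul, pderiv_pow, hL, Fin.sum_univ_three, Matrix.of_apply, map_mul,
        map_ofNat, hMdef]
      push_cast
      ring
    have hM0 : (X 1 * X 2 : MvPolynomial (Fin 3) k) = ∑ i, C (M 0 i) * (linForm (a i))^2 := by
      rw [← key 0]; simp [pderiv_mul]; try ring
    have hM1 : (X 0 * X 2 : MvPolynomial (Fin 3) k) = ∑ i, C (M 1 i) * (linForm (a i))^2 := by
      rw [← key 1]; simp [pderiv_mul]; try ring
    have hM2 : (X 0 * X 1 : MvPolynomial (Fin 3) k) = ∑ i, C (M 2 i) * (linForm (a i))^2 := by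
      rw [← key 2]; simp [pderiv_mul]; try ring
    have hdet : M.det ≠ 0 := by
      intro hdet0
      obtain ⟨v, hv0, hv⟩ := Matrix.exists_vecMul_eq_zero_iff.mpr hdet0
      have hvi : ∀ i : Fin 3, v 0 * M 0 i + v 1 * M 1 i + v 2 * M 2 i = 0 := by
        intro i
        have := congrFun hv i
        simpa [Matrix.vecMul, dotProduct, Fin.sum_univ_three] using this
      have hCvi : ∀ i : Fin 3, C (v 0) * C (M 0 i) + C (v 1) * C (M 1 i) + C (v 2) * C (M 2 i)
          = (0 : MvPolynomial (Fin 3) k) := by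
        intro i
        have := congrArg (fun x => (C x : MvPolynomial (Fin 3) k)) (hvi i)
        simpa only [map_add, map_mul, map_zero] using this
      have hz : C (v 0) * (X 1 * X 2) + C (v 1) * (X 0 * X 2) + C (v 2) * (X 0 * X 1)
          = (0 : MvPolynomial (Fin 3) k) := by
        rw [hM0, hM1, hM2]
        simp only [Fin.sum_univ_three]
        linear_combination (linForm (a 0))^2 * hCvi 0 + (linForm (a 1))^2 * hCvi 1
          + (linForm (a 2))^2 * hCvi 2
      have e0 : v 0 = 0 := by
        have := congrArg (eval ![0, 1, 1]) hz
        simpa using this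
      have e1 : v 1 = 0 := by
        have := congrArg (eval ![1, 0, 1]) hz
        simpa using this
      have e2 : v 2 = 0 := by
        have := congrArg (eval ![1, 1, 0]) hz
        simpa using this
      exact hv0 (funext fun i => by fin_cases i <;> assumption)
    have hNM := Matrix.nonsing_inv_mul M (isUnit_iff_ne_zero.mpr hdet)
    set N := M⁻¹ with hNdef
    have hNMe : ∀ i m : Fin 3, N i 0 * M 0 m + N i 1 * M 1 m + N i 2 * M 2 m
        = if i = m then 1 else 0 := by
      intro i m
      have := congrFun (congrFun hNM i) m
      simpa [Matrix.mul_apply, Fin.sum_univ_three, Matrix.one_apply] using this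
    have hCNMe : ∀ i m : Fin 3, C (N i 0) * C (M 0 m) + C (N i 1) * C (M 1 m)
        + C (N i 2) * C (M 2 m) = (C (if i = m then 1 else 0) : MvPolynomial (Fin 3) k) := by
      intro i m
      have := congrArg (fun x => (C x : MvPolynomial (Fin 3) k)) (hNMe i m)
      simpa only [map_add, map_mul] using this
    have hwgen : ∀ (n0 n1 n2 e0 e1 e2 : k),
        (C n0 * C (M 0 0) + C n1 * C (M 1 0) + C n2 * C (M 2 0) = (C e0 : MvPolynomial (Fin 3) k)) →
        (C n0 * C (M 0 1) + C n1 * C (M 1 1) + C n2 * C (M 2 1) = (C e1 : MvPolynomial (Fin 3) k)) →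
        (C n0 * C (M 0 2) + C n1 * C (M 1 2) + C n2 * C (M 2 2) = (C e2 : MvPolynomial (Fin 3) k)) →
        C n0 * (X 1 * X 2) + C n1 * (X 0 * X 2) + C n2 * (X 0 * X 1)
          = C e0 * (linForm (a 0))^2 + C e1 * (linForm (a 1))^2 + C e2 * (linForm (a 2))^2 := by
      intro n0 n1 n2 e0 e1 e2 h0 h1 h2
      rw [hM0, hM1, hM2]
      simp only [Fin.sum_univ_three]
      linear_combination (linForm (a 0))^2 * h0 + (linForm (a 1))^2 * h1 + (linForm (a 2))^2 * h2
    have hw : ∀ i : Fin 3,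
        C (N i 0) * (X 1 * X 2) + C (N i 1) * (X 0 * X 2) + C (N i 2) * (X 0 * X 1)
          = (linForm (a i))^2 := by
      intro i
      rw [hwgen _ _ _ _ _ _ (hCNMe i 0) (hCNMe i 1) (hCNMe i 2)]
      fin_cases i <;> simp
    have ha : ∀ (i j : Fin 3), a i j = 0 := by
      intro i j
      have hp : ∀ (p : Fin 3 → k), (p 0 * p 1 = 0) → (p 0 * p 2 = 0) → (p 1 * p 2 = 0) →
          eval p (linForm (a i)) ^ 2 = 0 := by
        intro p q01 q02 q12
        have := congrArg (eval p) (hw i).symm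
        simpa [q01, q02, q12] using this
      fin_cases j
      · have := hp ![1, 0, 0] (by norm_num) (by norm_num [Matrix.cons_val_two, Matrix.tail_cons, Matrix.head_cons]) (by norm_num)
        simp [linForm, Fin.sum_univ_three, pow_eq_zero_iff] at this
        simpa using this
      · have := hp ![0, 1, 0] (by norm_num) (by norm_num) (by norm_num [Matrix.cons_val_two, Matrix.tail_cons, Matrix.head_cons])
        simp [linForm, Fin.sum_univ_three, pow_eq_zero_iff] at this
        simpa using this
      · have := hp ![0, 0, 1] (by norm_num) (by norm_num) (by norm_num)
        simp [linForm, Fin.sum_univ_three, pow_eq_zero_iff] at this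
        simpa using this
    have h111 := congrArg (eval (fun _ => (1 : k))) h
    simp [linForm, Fin.sum_univ_three, ha, eval_X] at h111
  · refine ⟨![(24:k)⁻¹, -(24:k)⁻¹, -(24:k)⁻¹, (24:k)⁻¹],
      ![![1,1,1], ![1,1,-1], ![1,-1,1], ![1,-1,-1]], ?_⟩
    have h : (C ((24:k)⁻¹) : MvPolynomial (Fin 3) k) * 24 = 1 := by
      rw [show ((24 : MvPolynomial (Fin 3) k)) = C (24:k) by simp [map_ofNat], ← C_mul]
      norm_num
    simp only [linForm, Fin.sum_univ_three, Fin.sum_univ_four, Matrix.cons_val_zero,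
      Matrix.cons_val_one, Matrix.head_cons, Matrix.cons_val_two, Matrix.tail_cons,
      Matrix.cons_val_three, map_neg, map_one, C_1]
    linear_combination (-(X 0) * X 1 * X 2 : MvPolynomial (Fin 3) k) * h
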